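/- Let X be a finite set with |X| = n, let a ∈ T_X be an idempotent with rank(a) = r, and let P = {f ∈ T_X : rank(afa) = rank(f)} be the set of regular elements of T_X^a. For f, g ∈ T_X: (i) if f ∈ P, then the 𝒟^a-class of f lies below that of g if and only if rank(f) ≤ rank(aga); (ii) if g ∈ P, then the 𝒟^a-class of f lies below that of g if and only if rank(f) ≤ rank(g). Consequently the regular 𝒟^a-classes of T_X^a form a chain D_1^a < ⋯ < D_r^a, where D_m^a = {f ∈ P : rank(f) = m} for 1 ≤ m ≤ r. -/

import Mathlib

/-- Left-to-right composition of transformations: `x (f * g) = (x f) g`. -/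
def tmul {X : Type*} (f g : X → X) : X → X := fun x => g (f x)

/-- The variant product: `f ⋆ g = f · a · g` (left-to-right). -/
def vmul {X : Type*} (a f g : X → X) : X → X := fun x => g (a (f x))

/-- The rank of a transformation: the size of its image. -/
def rnk {X : Type*} [Fintype X] [DecidableEq X] (f : X → X) : ℕ :=
  (Finset.univ.image f).card

/-- `f` lies in the principal two-sided ideal of the variant `T_X^a` generated by `g`;
this is the order on 𝒟^a(= 𝒥^a)-classes: `D_f^a ≤ D_g^a`. -/
def dLe {X : Type*} (a f g : X → X) : Prop :=
  f = g ∨ (∃ u, vmul a u g = f) ∨ (∃ v, vmul a g v = f) ∨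
    (∃ u v, vmul a (vmul a u g) v = f)

lemma rnk_comp_le {X : Type*} [Fintype X] [DecidableEq X] (p m q : X → X) :
    rnk (fun x => q (m (p x))) ≤ rnk m := by
  unfold rnk
  calc (Finset.univ.image (fun x => q (m (p x)))).card
      ≤ ((Finset.univ.image m).image q).card := Finset.card_le_card (by
        intro y hy
        simp only [Finset.mem_image, Finset.mem_univ, true_and] at *
        obtain ⟨x, rfl⟩ := hy
        exact ⟨m (p x), ⟨p x, rfl⟩, rfl⟩)
    _ ≤ (Finset.univ.image m).card := Finset.card_image_le

lemma factor_of_rnk_le {X : Type*} [Fintype X] [DecidableEq X] (f h : X → X)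
    (hle : rnk f ≤ rnk h) : ∃ u v : X → X, (fun x => v (h (u x))) = f := by
  classical
  have hcard : Fintype.card (Finset.univ.image f) ≤ Fintype.card (Finset.univ.image h) := by
    rw [Fintype.card_coe, Fintype.card_coe]; exact hle
  obtain ⟨φ⟩ := Function.Embedding.nonempty_of_card_le hcard
  have hmemS : ∀ x, f x ∈ Finset.univ.image f :=
    fun x => Finset.mem_image_of_mem f (Finset.mem_univ x)
  have hT : ∀ t : (Finset.univ.image h : Finset X), ∃ w, h w = (t : X) := by
    intro t
    have := t.2
    simp only [Finset.mem_image, Finset.mem_univ, true_and] at this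
    exact this
  choose w hw using hT
  refine ⟨fun x => w (φ ⟨f x, hmemS x⟩),
    fun z => if hz : ∃ s : (Finset.univ.image f : Finset X), ((φ s : X) = z) then
      (hz.choose : X) else z, ?_⟩
  funext x
  simp only
  rw [hw]
  have hex : ∃ s : (Finset.univ.image f : Finset X),
      ((φ s : X) = (φ ⟨f x, hmemS x⟩ : X)) := ⟨_, rfl⟩
  rw [dif_pos hex]
  have : hex.choose = ⟨f x, hmemS x⟩ := φ.injective (Subtype.ext hex.choose_spec)
  rw [this]

theorem stmt_8 {X : Type*} [Fintype X] [DecidableEq X]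
    (n : ℕ) (hn : n = Fintype.card X)
    (a : X → X) (ha : tmul a a = a) (r : ℕ) (hr : rnk a = r)
    (P : Set (X → X)) (hP : P = {f : X → X | rnk (tmul (tmul a f) a) = rnk f}) :
    -- (i)
    (∀ f ∈ P, ∀ g : X → X, dLe a f g ↔ rnk f ≤ rnk (tmul (tmul a g) a)) ∧
    -- (ii)
    (∀ f : X → X, ∀ g ∈ P, dLe a f g ↔ rnk f ≤ rnk g) ∧
    -- the regular 𝒟^a-classes form a chain D_1^a < ⋯ < D_r^a,
    -- where D_m^a = {f ∈ P : rank f = m}: the 𝒟^a-class of f ∈ P is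
    -- {g ∈ P : rank g = rank f}, and the order on these classes is by rank
    (∀ f ∈ P, {g : X → X | dLe a g f ∧ dLe a f g} = {g : X → X | g ∈ P ∧ rnk g = rnk f}) ∧
    (∀ f ∈ P, ∀ g ∈ P, dLe a f g ↔ rnk f ≤ rnk g) ∧
    (∀ f ∈ P, rnk f ≤ r) := by
  classical
  subst hP hr
  -- backward direction: if rnk f ≤ rnk (a g a) then f is in the ideal of g
  have key_bwd : ∀ f g : X → X, rnk f ≤ rnk (tmul (tmul a g) a) → dLe a f g := by
    intro f g hle
    obtain ⟨u, v, huv⟩ := factor_of_rnk_le f (tmul (tmul a g) a) hle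
    refine Or.inr (Or.inr (Or.inr ⟨u, v, ?_⟩))
    rw [← huv]
    funext x
    simp [vmul, tmul]
  -- forward, general: dLe a f g → rnk f ≤ rnk g
  have fwd_g : ∀ f g : X → X, dLe a f g → rnk f ≤ rnk g := by
    intro f g hd
    rcases hd with rfl | ⟨u, rfl⟩ | ⟨v, rfl⟩ | ⟨u, v, rfl⟩
    · exact le_refl _
    · unfold vmul; simpa [vmul] using rnk_comp_le (fun x => a (u x)) g id
    · unfold vmul; simpa [vmul] using rnk_comp_le id g (fun y => v (a y))
    · unfold vmul; simpa [vmul] using rnk_comp_le (fun x => a (u x)) g (fun y => v (a y))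
  -- forward for regular f: dLe a f g → rnk f ≤ rnk (a g a)
  have fwd_aga : ∀ f g : X → X, rnk (tmul (tmul a f) a) = rnk f → dLe a f g →
      rnk f ≤ rnk (tmul (tmul a g) a) := by
    intro f g hf hd
    rw [← hf]
    rcases hd with rfl | ⟨u, rfl⟩ | ⟨v, rfl⟩ | ⟨u, v, rfl⟩
    · exact le_refl _
    · unfold vmul tmul; simpa [vmul, tmul] using
        rnk_comp_le (fun x => u (a x)) (fun y => a (g (a y))) id
    · unfold vmul tmul; simpa [vmul, tmul] using
        rnk_comp_le id (fun y => a (g (a y))) (fun y => a (v y))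
    · unfold vmul tmul; simpa [vmul, tmul] using
        rnk_comp_le (fun x => u (a x)) (fun y => a (g (a y))) (fun y => a (v y))
  have aga_le : ∀ g : X → X, rnk (tmul (tmul a g) a) ≤ rnk g := by
    intro g
    unfold tmul; simpa [tmul] using rnk_comp_le a g a
  refine ⟨?_, ?_, ?_, ?_, ?_⟩
  · -- (i)
    intro f hf g
    exact ⟨fwd_aga f g hf, key_bwd f g⟩
  · -- (ii)
    intro f g hg
    have hg' : rnk (tmul (tmul a g) a) = rnk g := hg
    exact ⟨fwd_g f g, fun hle => key_bwd f g (by rw [hg']; exact hle)⟩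
  · -- (iii)
    intro f hf
    have hf' : rnk (tmul (tmul a f) a) = rnk f := hf
    ext g
    simp only [Set.mem_setOf_eq]
    constructor
    · rintro ⟨hgf, hfg⟩
      have h1 : rnk g ≤ rnk f := fwd_g g f hgf
      have h2 : rnk f ≤ rnk g := fwd_g f g hfg
      have h3 : rnk f ≤ rnk (tmul (tmul a g) a) := fwd_aga f g hf' hfg
      exact ⟨le_antisymm (aga_le g) (h1.trans h3), le_antisymm h1 h2⟩
    · rintro ⟨hg, heq⟩
      have hg' : rnk (tmul (tmul a g) a) = rnk g := hg
      refine ⟨key_bwd g f (by rw [hf']; exact heq.le), key_bwd f g (by rw [hg']; exact heq.ge)⟩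
  · -- (iv)
    intro f hf g hg
    have hg' : rnk (tmul (tmul a g) a) = rnk g := hg
    exact ⟨fwd_g f g, fun hle => key_bwd f g (by rw [hg']; exact hle)⟩
  · -- (v)
    intro f hf
    have hf' : rnk (tmul (tmul a f) a) = rnk f := hf
    rw [← hf']
    unfold tmul; simpa [tmul] using rnk_comp_le (fun x => f (a x)) a id
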